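/- Let U ⊆ ℝ^k be an open set, p ≥ 1, and for 1 ≤ i,j ≤ k let a_{ij} : (ℝ^k)^p → ℝ be smooth functions. Suppose u, v : U → ℝ^p are smooth maps such that for every l ∈ {1,…,p}, Σ_{i,j=1}^k (a_{ij}(∇u_1,…,∇u_p) / √(1+|∇u_l|²)) · D_{ij}u_l = 0 on U, and likewise Σ_{i,j=1}^k (a_{ij}(∇v_1,…,∇v_p) / √(1+|∇v_l|²)) · D_{ij}v_l = 0 on U. Then there exist smooth functions b_j^{m,l} : U → ℝ (1 ≤ j ≤ k, 1 ≤ m,l ≤ p) such that the difference φ = u − v satisfies, for each l ∈ {1,…,p}, the linear equation Σ_{i,j=1}^k (a_{ij}(∇u_1,…,∇u_p) / √(1+|∇u_l|²)) · D_{ij}φ_l + Σ_{m=1}^p Σ_{j=1}^k b_j^{m,l} · D_j φ_m = 0 on U. -/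

import Mathlib

/-- The `i`-th partial derivative of a function `f : ℝ^k → ℝ`. -/
noncomputable def pd {k : ℕ} (i : Fin k) (f : (Fin k → ℝ) → ℝ) : (Fin k → ℝ) → ℝ :=
  fun x => fderiv ℝ f x (Pi.single i 1)

/-- The gradient of a function `f : ℝ^k → ℝ` as a map into `ℝ^k`. -/
noncomputable def grad {k : ℕ} (f : (Fin k → ℝ) → ℝ) : (Fin k → ℝ) → (Fin k → ℝ) :=
  fun x i => pd i f x


open MeasureTheory Metric Set
open scoped Convolution


lemma clm_decomp {p k : ℕ} (L : (Fin p → Fin k → ℝ) →L[ℝ] ℝ) (h : Fin p → Fin k → ℝ) :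
    L h = ∑ m, ∑ j, h m j * L (Pi.single m (Pi.single j 1)) := by
  have hrepr : h = ∑ m, ∑ j, h m j • (Pi.single m (Pi.single j (1:ℝ)) : Fin p → Fin k → ℝ) := by
    conv_lhs => rw [← Finset.univ_sum_single h]
    refine Finset.sum_congr rfl fun m _ => ?_
    have h2 : h m = ∑ j, h m j • (Pi.single j (1:ℝ) : Fin k → ℝ) := by
      conv_lhs => rw [← Finset.univ_sum_single (h m)]
      refine Finset.sum_congr rfl fun j _ => ?_
      rw [← Pi.single_smul, smul_eq_mul, mul_one]
    rw [h2]
    ext j' i'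
    by_cases hjm : j' = m <;>
      simp [Pi.single_apply, hjm, Finset.sum_apply]
  conv_lhs => rw [hrepr]
  rw [map_sum]
  refine Finset.sum_congr rfl fun m _ => ?_
  rw [map_sum]
  refine Finset.sum_congr rfl fun j _ => ?_
  rw [_root_.map_smul, smul_eq_mul]


lemma hadamard {p k : ℕ} (F : (Fin p → Fin k → ℝ) → ℝ) (hF : ContDiff ℝ (⊤:ℕ∞) F) :
    ∃ c : Fin p → Fin k → ((Fin p → Fin k → ℝ) × (Fin p → Fin k → ℝ)) → ℝ,
      (∀ m j, ContDiff ℝ (⊤:ℕ∞) (c m j)) ∧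
      ∀ z w, F z - F w = ∑ m, ∑ j, c m j (z, w) * (z m j - w m j) := by
  classical
  let γ : (Fin p → Fin k → ℝ) × (Fin p → Fin k → ℝ) → ℝ → (Fin p → Fin k → ℝ) := fun q t => q.2 + t • (q.1 - q.2)
  have hγ : ContDiff ℝ (⊤:ℕ∞) (fun qt : ((Fin p → Fin k → ℝ) × (Fin p → Fin k → ℝ)) × ℝ => γ qt.1 qt.2) := by
    apply ContDiff.add
    · exact contDiff_snd.comp contDiff_fst
    · exact contDiff_snd.smul ((contDiff_fst.comp contDiff_fst).sub
        (contDiff_snd.comp contDiff_fst))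
  have hfderiv : ContDiff ℝ (⊤:ℕ∞) (fderiv ℝ F) := hF.fderiv_right (by exact_mod_cast le_top)
  let dF : Fin p → Fin k → ((Fin p → Fin k → ℝ) × (Fin p → Fin k → ℝ)) → ℝ → ℝ := fun m j q t =>
    fderiv ℝ F (γ q t) (Pi.single m (Pi.single j 1))
  have hdF : ∀ m j, ContDiff ℝ (⊤:ℕ∞) (fun qt : ((Fin p → Fin k → ℝ) × (Fin p → Fin k → ℝ)) × ℝ => dF m j qt.1 qt.2) := by
    intro m j
    exact (hfderiv.comp hγ).clm_apply contDiff_const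
  let φ : ContDiffBump (0:ℝ) := ⟨1, 2, one_pos, one_lt_two⟩
  let f : ℝ → ℝ := (Set.Ioc (0:ℝ) 1).indicator (fun _ => (1:ℝ))
  have hf : LocallyIntegrable f volume := by
    apply Integrable.locallyIntegrable
    rw [integrable_indicator_iff measurableSet_Ioc]
    exact integrableOn_const measure_Ioc_lt_top.ne
  let g : Fin p → Fin k → ((Fin p → Fin k → ℝ) × (Fin p → Fin k → ℝ)) → ℝ → ℝ :=
    fun m j q y => φ y * dF m j q (-y)
  have hgs : ∀ m j, ∀ q, ∀ y : ℝ,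
      q ∈ (univ : Set ((Fin p → Fin k → ℝ) × (Fin p → Fin k → ℝ))) →
      y ∉ closedBall (0:ℝ) 2 → g m j q y = 0 := by
    intro m j q y _ hy
    have : φ y = 0 := by
      have := φ.support_eq
      by_contra h
      exact hy (ball_subset_closedBall (this ▸ Function.mem_support.2 h))
    simp [g, this]
  let c : Fin p → Fin k → ((Fin p → Fin k → ℝ) × (Fin p → Fin k → ℝ)) → ℝ :=
    fun m j q => (f ⋆[ContinuousLinearMap.mul ℝ ℝ, volume] g m j q) 0
  have hgc : ∀ m j, ContDiff ℝ (⊤:ℕ∞) (fun qy :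
      ((Fin p → Fin k → ℝ) × (Fin p → Fin k → ℝ)) × ℝ => g m j qy.1 qy.2) := by
    intro m j
    exact (φ.contDiff.comp contDiff_snd).mul
      ((hdF m j).comp (contDiff_fst.prodMk contDiff_snd.neg))
  have hc : ∀ m j, ContDiff ℝ (⊤:ℕ∞) (c m j) := by
    intro m j
    rw [← contDiffOn_univ]
    exact contDiffOn_convolution_right_with_param_comp (ContinuousLinearMap.mul ℝ ℝ)
      (contDiffOn_const : ContDiffOn ℝ (⊤:ℕ∞) (fun _ => (0:ℝ)) univ) isOpen_univ
      (isCompact_closedBall (0:ℝ) 2) (hgs m j) hf ((hgc m j).contDiffOn)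
  refine ⟨c, hc, fun z w => ?_⟩
  -- value of the convolution
  have hval : ∀ m j, c m j (z, w) = ∫ t in (0:ℝ)..1, dF m j (z, w) t := by
    intro m j
    have h1 : ∀ t : ℝ, (ContinuousLinearMap.mul ℝ ℝ) (f t) (g m j (z, w) (0 - t))
        = (Ioc (0:ℝ) 1).indicator (fun t => dF m j (z, w) t) t := by
      intro t
      by_cases ht : t ∈ Ioc (0:ℝ) 1
      · have hφ : φ (-t) = 1 := by
          apply φ.one_of_mem_closedBall
          simp only [mem_closedBall, dist_zero_right, Real.norm_eq_abs, abs_neg]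
          rw [abs_of_pos ht.1]
          exact ht.2
        simp [f, g, indicator_of_mem ht, zero_sub, neg_neg, hφ]
      · simp [f, g, indicator_of_notMem ht]
    show (f ⋆[ContinuousLinearMap.mul ℝ ℝ, volume] g m j (z, w)) 0 = _
    rw [convolution_def]
    simp_rw [h1]
    rw [integral_indicator measurableSet_Ioc,
      intervalIntegral.integral_of_le (zero_le_one)]
  -- FTC
  have hdiff : Differentiable ℝ F := hF.differentiable (by simp)
  have hψ : ∀ t : ℝ, HasDerivAt (fun s => F (γ (z, w) s))
      (fderiv ℝ F (γ (z, w) t) (z - w)) t := by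
    intro t
    have h2 : HasDerivAt (fun s : ℝ => w + s • (z - w)) (z - w) t := by
      have := ((hasDerivAt_id t).smul_const (z - w)).const_add w
      simpa using this
    exact ((hdiff (γ (z, w) t)).hasFDerivAt.comp_hasDerivAt t h2)
  have hcont : Continuous (fun t : ℝ => fderiv ℝ F (γ (z, w) t) (z - w)) := by
    have hγc : Continuous (γ (z, w)) := by
      apply Continuous.add continuous_const
      exact continuous_id.smul continuous_const
    exact (hfderiv.continuous.comp hγc).clm_apply continuous_const
  have hFTC : ∫ t in (0:ℝ)..1, fderiv ℝ F (γ (z, w) t) (z - w) = F z - F w := by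
    rw [intervalIntegral.integral_eq_sub_of_hasDerivAt
      (fun t _ => hψ t) (hcont.intervalIntegrable 0 1)]
    simp [γ]
  calc F z - F w = ∫ t in (0:ℝ)..1, fderiv ℝ F (γ (z, w) t) (z - w) := hFTC.symm
    _ = ∫ t in (0:ℝ)..1, ∑ m, ∑ j, dF m j (z, w) t * (z m j - w m j) := by
        apply intervalIntegral.integral_congr
        intro t _
        have hd := clm_decomp (fderiv ℝ F (γ (z, w) t)) (z - w)
        simp only [Pi.sub_apply] at hd
        simp only [dF]
        rw [hd]
        exact Finset.sum_congr rfl fun m _ => Finset.sum_congr rfl fun j _ => mul_comm _ _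
    _ = ∑ m, ∑ j, c m j (z, w) * (z m j - w m j) := by
        rw [intervalIntegral.integral_finset_sum]
        · refine Finset.sum_congr rfl fun m _ => ?_
          rw [intervalIntegral.integral_finset_sum]
          · refine Finset.sum_congr rfl fun j _ => ?_
            rw [intervalIntegral.integral_mul_const, hval]
          · intro j _
            apply Continuous.intervalIntegrable
            exact (((hdF m j).continuous.comp
              (continuous_const.prodMk continuous_id)).mul continuous_const)
        · intro m _
          apply Continuous.intervalIntegrable
          apply continuous_finset_sum
          intro j _
          exact (((hdF m j).continuous.comp
            (continuous_const.prodMk continuous_id)).mul continuous_const)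

lemma contDiffOn_pd {k : ℕ} {U : Set (Fin k → ℝ)} (hU : IsOpen U) {f : (Fin k → ℝ) → ℝ}
    (hf : ContDiffOn ℝ (⊤:ℕ∞) f U) (j : Fin k) : ContDiffOn ℝ (⊤:ℕ∞) (pd j f) U := by
  have h1 : ContDiffOn ℝ (⊤:ℕ∞) (fderiv ℝ f) U :=
    hf.fderiv_of_isOpen hU (by exact_mod_cast le_top)
  exact h1.clm_apply contDiffOn_const

lemma sum_swap4 {ι₁ ι₂ ι₃ ι₄ M : Type*} [Fintype ι₁] [Fintype ι₂] [Fintype ι₃] [Fintype ι₄]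
    [AddCommMonoid M] (t : ι₁ → ι₂ → ι₃ → ι₄ → M) :
    ∑ a, ∑ b, ∑ c, ∑ d, t a b c d = ∑ c, ∑ d, ∑ a, ∑ b, t a b c d := by
  calc ∑ a, ∑ b, ∑ c, ∑ d, t a b c d
      = ∑ a, ∑ c, ∑ b, ∑ d, t a b c d :=
        Finset.sum_congr rfl fun a _ => Finset.sum_comm
    _ = ∑ c, ∑ a, ∑ b, ∑ d, t a b c d := Finset.sum_comm
    _ = ∑ c, ∑ a, ∑ d, ∑ b, t a b c d :=
        Finset.sum_congr rfl fun c _ => Finset.sum_congr rfl fun a _ => Finset.sum_comm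
    _ = ∑ c, ∑ d, ∑ a, ∑ b, t a b c d :=
        Finset.sum_congr rfl fun c _ => Finset.sum_comm


/-- If `u, v : U ⊆ ℝ^k → ℝ^p` both satisfy the quasilinear minimal-graph type system
`Σ_{ij} (a_{ij}(∇u₁,…,∇u_p)/√(1+|∇u_l|²)) D_{ij}u_l = 0`, then the difference `φ = u - v`
satisfies a linear system
`Σ_{ij} (a_{ij}(∇u)/√(1+|∇u_l|²)) D_{ij}φ_l + Σ_{m,j} b_j^{m,l} D_j φ_m = 0`
with smooth coefficients `b_j^{m,l}`. -/
theorem difference_of_solutions_satisfies_linear_system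
    (k p : ℕ) (hp : 1 ≤ p) (U : Set (Fin k → ℝ)) (hU : IsOpen U)
    (a : Fin k → Fin k → (Fin p → (Fin k → ℝ)) → ℝ)
    (ha : ∀ i j, ContDiff ℝ (⊤ : ℕ∞) (a i j))
    (u v : (Fin k → ℝ) → Fin p → ℝ)
    (hu : ContDiffOn ℝ (⊤ : ℕ∞) u U) (hv : ContDiffOn ℝ (⊤ : ℕ∞) v U)
    (hueq : ∀ l : Fin p, ∀ x ∈ U,
      ∑ i, ∑ j,
        a i j (fun m => grad (fun y => u y m) x) /
          Real.sqrt (1 + ∑ i', (pd i' (fun y => u y l) x) ^ 2) *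
        pd i (pd j (fun y => u y l)) x = 0)
    (hveq : ∀ l : Fin p, ∀ x ∈ U,
      ∑ i, ∑ j,
        a i j (fun m => grad (fun y => v y m) x) /
          Real.sqrt (1 + ∑ i', (pd i' (fun y => v y l) x) ^ 2) *
        pd i (pd j (fun y => v y l)) x = 0) :
    ∃ b : Fin k → Fin p → Fin p → (Fin k → ℝ) → ℝ,
      (∀ j m l, ContDiffOn ℝ (⊤ : ℕ∞) (b j m l) U) ∧
      ∀ l : Fin p, ∀ x ∈ U,
        ∑ i, ∑ j,
          a i j (fun m => grad (fun y => u y m) x) /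
            Real.sqrt (1 + ∑ i', (pd i' (fun y => u y l) x) ^ 2) *
          pd i (pd j (fun y => u y l - v y l)) x
        + ∑ m, ∑ j, b j m l x * pd j (fun y => u y m - v y m) x = 0 := by
  classical
  -- component functions are smooth
  have hul : ∀ m : Fin p, ContDiffOn ℝ (⊤:ℕ∞) (fun y => u y m) U := fun m =>
    (ContinuousLinearMap.proj (R := ℝ) (φ := fun _ : Fin p => ℝ) m).contDiff.comp_contDiffOn hu
  have hvl : ∀ m : Fin p, ContDiffOn ℝ (⊤:ℕ∞) (fun y => v y m) U := fun m =>
    (ContinuousLinearMap.proj (R := ℝ) (φ := fun _ : Fin p => ℝ) m).contDiff.comp_contDiffOn hv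
  -- gradient maps
  set Gu : (Fin k → ℝ) → Fin p → Fin k → ℝ := fun x m => grad (fun y => u y m) x with hGudef
  set Gv : (Fin k → ℝ) → Fin p → Fin k → ℝ := fun x m => grad (fun y => v y m) x with hGvdef
  have hGu : ContDiffOn ℝ (⊤:ℕ∞) Gu U := by
    apply contDiffOn_pi.2
    intro m
    apply contDiffOn_pi.2
    intro j
    exact contDiffOn_pd hU (hul m) j
  have hGv : ContDiffOn ℝ (⊤:ℕ∞) Gv U := by
    apply contDiffOn_pi.2
    intro m
    apply contDiffOn_pi.2
    intro j
    exact contDiffOn_pd hU (hvl m) j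
  -- the nonlinear coefficients
  set F : Fin p → Fin k → Fin k → (Fin p → Fin k → ℝ) → ℝ := fun l i j z =>
    a i j z / Real.sqrt (1 + ∑ i', (z l i') ^ 2) with hFdef
  have hFs : ∀ l i j, ContDiff ℝ (⊤:ℕ∞) (F l i j) := by
    intro l i j
    have hden : ContDiff ℝ (⊤:ℕ∞) (fun z : Fin p → Fin k → ℝ => 1 + ∑ i', (z l i') ^ 2) := by
      apply contDiff_const.add
      apply ContDiff.sum
      intro i' _
      have : ContDiff ℝ (⊤:ℕ∞) (fun z : Fin p → Fin k → ℝ => z l i') :=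
        ((ContinuousLinearMap.proj (R := ℝ) (φ := fun _ : Fin k => ℝ) i').comp
          (ContinuousLinearMap.proj (R := ℝ) (φ := fun _ : Fin p => Fin k → ℝ) l)).contDiff
      exact this.pow 2
    rw [contDiff_iff_contDiffAt]
    intro z
    have hpos : (0:ℝ) < 1 + ∑ i', (z l i') ^ 2 := by positivity
    refine ContDiffAt.div (ha i j).contDiffAt ?_ ?_
    · exact (Real.contDiffAt_sqrt hpos.ne').comp z hden.contDiffAt
    · exact (Real.sqrt_pos.2 hpos).ne'
  -- Hadamard coefficients
  have H : ∀ l i j, ∃ c : Fin p → Fin k →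
      ((Fin p → Fin k → ℝ) × (Fin p → Fin k → ℝ)) → ℝ,
      (∀ m j', ContDiff ℝ (⊤:ℕ∞) (c m j')) ∧
      ∀ z w, F l i j z - F l i j w = ∑ m, ∑ j', c m j' (z, w) * (z m j' - w m j') :=
    fun l i j => hadamard (F l i j) (hFs l i j)
  choose c hc1 hc2 using H
  -- the linear coefficients
  refine ⟨fun j' m l x => ∑ i, ∑ j, c l i j m j' (Gu x, Gv x) *
    pd i (pd j (fun y => v y l)) x, ?_, ?_⟩
  · -- smoothness of b
    intro j' m l
    apply ContDiffOn.sum; intro i _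
    apply ContDiffOn.sum; intro j _
    apply ContDiffOn.mul
    · exact (hc1 l i j m j').comp_contDiffOn (hGu.prodMk hGv)
    · exact contDiffOn_pd hU (contDiffOn_pd hU (hvl l) j) i
  · -- the pointwise identity
    intro l x hx
    -- first-derivative difference splitting, on all of U
    have hsub1 : ∀ m : Fin p, ∀ j' : Fin k, ∀ y ∈ U,
        pd j' (fun y => u y m - v y m) y = pd j' (fun y => u y m) y - pd j' (fun y => v y m) y := by
      intro m j' y hy
      have hdu : DifferentiableAt ℝ (fun y => u y m) y :=
        (((hul m) y hy).contDiffAt (hU.mem_nhds hy)).differentiableAt (by simp)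
      have hdv : DifferentiableAt ℝ (fun y => v y m) y :=
        (((hvl m) y hy).contDiffAt (hU.mem_nhds hy)).differentiableAt (by simp)
      show fderiv ℝ _ y _ = _
      rw [fderiv_fun_sub hdu hdv]
      rfl
    -- second-derivative difference splitting at x
    have hsub2 : ∀ i j : Fin k,
        pd i (pd j (fun y => u y l - v y l)) x =
          pd i (pd j (fun y => u y l)) x - pd i (pd j (fun y => v y l)) x := by
      intro i j
      have heq : pd j (fun y => u y l - v y l) =ᶠ[nhds x]
          fun y => pd j (fun y => u y l) y - pd j (fun y => v y l) y := by
        filter_upwards [hU.mem_nhds hx] with y hy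
        exact hsub1 l j y hy
      have hdu : DifferentiableAt ℝ (pd j (fun y => u y l)) x :=
        ((contDiffOn_pd hU (hul l) j x hx).contDiffAt (hU.mem_nhds hx)).differentiableAt
          (by simp)
      have hdv : DifferentiableAt ℝ (pd j (fun y => v y l)) x :=
        ((contDiffOn_pd hU (hvl l) j x hx).contDiffAt (hU.mem_nhds hx)).differentiableAt
          (by simp)
      show fderiv ℝ _ x _ = _
      rw [heq.fderiv_eq, fderiv_fun_sub hdu hdv]
      rfl
    -- the two PDEs with coefficients rewritten
    have hueq' : ∑ i, ∑ j, F l i j (Gu x) * pd i (pd j (fun y => u y l)) x = 0 := hueq l x hx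
    have hveq' : ∑ i, ∑ j, F l i j (Gv x) * pd i (pd j (fun y => v y l)) x = 0 := hveq l x hx
    -- rewrite the goal
    have hgoalcoef : ∀ i j : Fin k,
        a i j (fun m => grad (fun y => u y m) x) /
          Real.sqrt (1 + ∑ i', (pd i' (fun y => u y l) x) ^ 2) = F l i j (Gu x) := fun i j => rfl
    calc ∑ i, ∑ j,
          a i j (fun m => grad (fun y => u y m) x) /
            Real.sqrt (1 + ∑ i', (pd i' (fun y => u y l) x) ^ 2) *
          pd i (pd j (fun y => u y l - v y l)) x
        + ∑ m, ∑ j', (∑ i, ∑ j, c l i j m j' (Gu x, Gv x) *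
            pd i (pd j (fun y => v y l)) x) * pd j' (fun y => u y m - v y m) x
        = ∑ i, ∑ j, F l i j (Gu x) *
            (pd i (pd j (fun y => u y l)) x - pd i (pd j (fun y => v y l)) x)
          + ∑ m, ∑ j', (∑ i, ∑ j, c l i j m j' (Gu x, Gv x) *
              pd i (pd j (fun y => v y l)) x) * (Gu x m j' - Gv x m j') := by
          congr 1
          · refine Finset.sum_congr rfl fun i _ => Finset.sum_congr rfl fun j _ => ?_
            rw [hgoalcoef i j, hsub2 i j]
          · refine Finset.sum_congr rfl fun m _ => Finset.sum_congr rfl fun j' _ => ?_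
            rw [hsub1 m j' x hx]
            rfl
      _ = ∑ i, ∑ j, F l i j (Gu x) *
            (pd i (pd j (fun y => u y l)) x - pd i (pd j (fun y => v y l)) x)
          + ∑ i, ∑ j, (F l i j (Gu x) - F l i j (Gv x)) * pd i (pd j (fun y => v y l)) x := by
          congr 1
          have hswap : ∑ m, ∑ j', (∑ i, ∑ j, c l i j m j' (Gu x, Gv x) *
              pd i (pd j (fun y => v y l)) x) * (Gu x m j' - Gv x m j')
              = ∑ i, ∑ j, (∑ m, ∑ j', c l i j m j' (Gu x, Gv x) * (Gu x m j' - Gv x m j')) *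
                  pd i (pd j (fun y => v y l)) x := by
            have := sum_swap4 (fun (m : Fin p) (j' : Fin k) (i : Fin k) (j : Fin k) =>
              c l i j m j' (Gu x, Gv x) * pd i (pd j (fun y => v y l)) x * (Gu x m j' - Gv x m j'))
            calc ∑ m, ∑ j', (∑ i, ∑ j, c l i j m j' (Gu x, Gv x) *
                  pd i (pd j (fun y => v y l)) x) * (Gu x m j' - Gv x m j')
                = ∑ m, ∑ j', ∑ i, ∑ j, c l i j m j' (Gu x, Gv x) *
                    pd i (pd j (fun y => v y l)) x * (Gu x m j' - Gv x m j') := by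
                  simp_rw [Finset.sum_mul]
              _ = ∑ i, ∑ j, ∑ m, ∑ j', c l i j m j' (Gu x, Gv x) *
                    pd i (pd j (fun y => v y l)) x * (Gu x m j' - Gv x m j') := this
              _ = ∑ i, ∑ j, (∑ m, ∑ j', c l i j m j' (Gu x, Gv x) * (Gu x m j' - Gv x m j')) *
                    pd i (pd j (fun y => v y l)) x := by
                  refine Finset.sum_congr rfl fun i _ => Finset.sum_congr rfl fun j _ => ?_
                  simp_rw [Finset.sum_mul]
                  refine Finset.sum_congr rfl fun m _ => Finset.sum_congr rfl fun j' _ => ?_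
                  ring
          rw [hswap]
          refine Finset.sum_congr rfl fun i _ => Finset.sum_congr rfl fun j _ => ?_
          rw [← hc2 l i j (Gu x) (Gv x)]
      _ = (∑ i, ∑ j, F l i j (Gu x) * pd i (pd j (fun y => u y l)) x)
          - ∑ i, ∑ j, F l i j (Gv x) * pd i (pd j (fun y => v y l)) x := by
          rw [← Finset.sum_add_distrib, ← Finset.sum_sub_distrib]
          refine Finset.sum_congr rfl fun i _ => ?_
          rw [← Finset.sum_add_distrib, ← Finset.sum_sub_distrib]
          refine Finset.sum_congr rfl fun j _ => ?_
          ring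
      _ = 0 := by rw [hueq', hveq', sub_zero]
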